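/- arXiv:1211.4599 — 10 statements merged into one kernel-verified Lean document; each statement's English description precedes it below -/
import Mathlib

section
/- Let {f_γ : D → ℝ | γ ∈ Γ} be a downward directed family of φ-convex functions (i.e., for all γ₁,γ₂ ∈ Γ and x₁,x₂ ∈ D there exists γ ∈ Γ with f_γ(x_i) ≤ f_{γ_i}(x_i) for i = 1,2). If f(x) := inf_γ f_γ(x) > −∞ for all x ∈ D, then f is φ-convex. -/
def PhiConvexOn {X : Type*} [NormedAddCommGroup X] [NormedSpace ℝ X]
    (D : Set X) (φ : ℝ → ℝ) (f : X → ℝ) : Prop :=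
  ∀ x ∈ D, ∀ y ∈ D, ∀ t ∈ Set.Icc (0:ℝ) 1,
    f (t • x + (1 - t) • y) ≤ t * f x + (1 - t) * f y
      + t * φ ((1 - t) * ‖x - y‖) + (1 - t) * φ (t * ‖x - y‖)

theorem stmt2 {X : Type*} [NormedAddCommGroup X] [NormedSpace ℝ X]
    (D : Set X) (hD : Convex ℝ D) (φ : ℝ → ℝ)
    {Γ : Type*} [Nonempty Γ] (f : Γ → X → ℝ)
    (hf : ∀ γ, PhiConvexOn D φ (f γ))
    (hdir : ∀ γ₁ γ₂ : Γ, ∀ x₁ ∈ D, ∀ x₂ ∈ D, ∃ γ : Γ,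
      f γ x₁ ≤ f γ₁ x₁ ∧ f γ x₂ ≤ f γ₂ x₂)
    (hbdd : ∀ x ∈ D, BddBelow (Set.range fun γ => f γ x)) :
    PhiConvexOn D φ (fun x => ⨅ γ, f γ x) := by
  intro x hx y hy t ht
  obtain ⟨ht0, ht1⟩ := ht
  have hz : t • x + (1 - t) • y ∈ D := hD hx hy ht0 (by linarith) (by ring)
  refine le_of_forall_pos_le_add ?_
  intro ε hε
  have h1 : ∃ γ₁, f γ₁ x < (⨅ γ, f γ x) + ε :=
    exists_lt_of_ciInf_lt (by linarith [lt_add_of_pos_right (⨅ γ, f γ x) hε])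
  have h2 : ∃ γ₂, f γ₂ y < (⨅ γ, f γ y) + ε :=
    exists_lt_of_ciInf_lt (by linarith [lt_add_of_pos_right (⨅ γ, f γ y) hε])
  obtain ⟨γ₁, hγ₁⟩ := h1
  obtain ⟨γ₂, hγ₂⟩ := h2
  obtain ⟨γ, hgx, hgy⟩ := hdir γ₁ γ₂ x hx y hy
  have hconv := hf γ x hx y hy t ⟨ht0, ht1⟩
  have hinf : (⨅ δ, f δ (t • x + (1 - t) • y)) ≤ f γ (t • x + (1 - t) • y) :=
    ciInf_le (hbdd _ hz) γ
  have h3 : f γ x ≤ (⨅ δ, f δ x) + ε := le_trans hgx hγ₁.le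
  have h4 : f γ y ≤ (⨅ δ, f δ y) + ε := le_trans hgy hγ₂.le
  have ht0' : 0 ≤ (1 - t) := by linarith
  calc (⨅ δ, f δ (t • x + (1 - t) • y)) ≤ f γ (t • x + (1 - t) • y) := hinf
    _ ≤ t * f γ x + (1 - t) * f γ y
        + t * φ ((1 - t) * ‖x - y‖) + (1 - t) * φ (t * ‖x - y‖) := hconv
    _ ≤ t * ((⨅ δ, f δ x) + ε) + (1 - t) * ((⨅ δ, f δ y) + ε)
        + t * φ ((1 - t) * ‖x - y‖) + (1 - t) * φ (t * ‖x - y‖) := by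
        gcongr
    _ = t * (⨅ δ, f δ x) + (1 - t) * (⨅ δ, f δ y)
        + t * φ ((1 - t) * ‖x - y‖) + (1 - t) * φ (t * ‖x - y‖) + ε := by ring
end

section
/- If f : D → ℝ satisfies |f(x) − f(y)| ≤ H·φ(‖x−y‖) for all x,y ∈ D (i.e., f is of φ-Hölder class with constant H), then f is (H·φ)-convex on D. -/
theorem stmt3 {X : Type*} [NormedAddCommGroup X] [NormedSpace ℝ X]
    (D : Set X) (hD : Convex ℝ D) (φ : ℝ → ℝ) (H : ℝ) (hH : 0 ≤ H)
    (f : X → ℝ)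
    (hHolder : ∀ x ∈ D, ∀ y ∈ D, |f x - f y| ≤ H * φ ‖x - y‖) :
    PhiConvexOn D (fun s => H * φ s) f := by
  intro x hx y hy t ht
  obtain ⟨ht0, ht1⟩ := ht
  set z := t • x + (1 - t) • y with hz
  have hzD : z ∈ D := hD hx hy ht0 (by linarith) (by ring)
  have hzx : ‖z - x‖ = (1 - t) * ‖x - y‖ := by
    have : z - x = (1 - t) • (y - x) := by
      rw [hz]; module
    rw [this, norm_smul, Real.norm_eq_abs, abs_of_nonneg (by linarith),
      norm_sub_rev]
  have hzy : ‖z - y‖ = t * ‖x - y‖ := by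
    have : z - y = t • (x - y) := by
      rw [hz]; module
    rw [this, norm_smul, Real.norm_eq_abs, abs_of_nonneg ht0]
  have h1 : f z - f x ≤ H * φ ((1 - t) * ‖x - y‖) := by
    have := hHolder z hzD x hx
    rw [hzx] at this
    exact (abs_le.mp this).2
  have h2 : f z - f y ≤ H * φ (t * ‖x - y‖) := by
    have := hHolder z hzD y hy
    rw [hzy] at this
    exact (abs_le.mp this).2
  have := add_le_add (mul_le_mul_of_nonneg_left h1 ht0)
    (mul_le_mul_of_nonneg_left h2 (by linarith : (0:ℝ) ≤ 1 - t))
  simp only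
  nlinarith [this]
end

section
/- Let D be an open real interval, φ : D⁺ → ℝ₊, and f : D → ℝ be φ-convex. Then for all x,u,y ∈ D with x < u < y, (f(u) − f(x) − φ(u−x))/(u−x) ≤ (f(y) − f(u) + φ(y−u))/(y−u). -/
def PhiConvexOnReal (D : Set ℝ) (φ : ℝ → ℝ) (f : ℝ → ℝ) : Prop :=
  ∀ x ∈ D, ∀ y ∈ D, ∀ t ∈ Set.Icc (0:ℝ) 1,
    f (t * x + (1 - t) * y) ≤ t * f x + (1 - t) * f y
      + t * φ ((1 - t) * |x - y|) + (1 - t) * φ (t * |x - y|)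

theorem stmt6 (D : Set ℝ) (hDo : IsOpen D) (hDc : Convex ℝ D)
    (φ : ℝ → ℝ) (f : ℝ → ℝ) (hf : PhiConvexOnReal D φ f) :
    ∀ x ∈ D, ∀ u ∈ D, ∀ y ∈ D, x < u → u < y →
      (f u - f x - φ (u - x)) / (u - x) ≤ (f y - f u + φ (y - u)) / (y - u) := by
  intro x hx u hu y hy hxu huy
  have hxy : x < y := hxu.trans huy
  have hyx : (0:ℝ) < y - x := by linarith
  set t : ℝ := (y - u) / (y - x) with ht
  have ht0 : 0 ≤ t := div_nonneg (by linarith) hyx.le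
  have ht1 : t ≤ 1 := by
    rw [div_le_one hyx]; linarith
  have key := hf x hx y hy t ⟨ht0, ht1⟩
  have habs : |x - y| = y - x := by rw [abs_of_nonpos (by linarith)]; ring
  have htv : t * (y - x) = y - u := by rw [ht]; field_simp
  have h1t : (1 - t) * (y - x) = u - x := by
    have : t * (y - x) = y - u := htv
    nlinarith
  have harg : t * x + (1 - t) * y = u := by nlinarith
  rw [habs, harg, h1t] at key
  rw [htv] at key
  rw [div_le_div_iff₀ (by linarith) (by linarith)]
  have key2 : (y - x) * f u ≤ (y - u) * f x + (u - x) * f y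
      + (y - u) * φ (u - x) + (u - x) * φ (y - u) := by
    have h := mul_le_mul_of_nonneg_left key hyx.le
    have e : (y - x) * (t * f x + (1 - t) * f y + t * φ (u - x) + (1 - t) * φ (y - u))
        = (y - u) * f x + (u - x) * f y + (y - u) * φ (u - x) + (u - x) * φ (y - u) := by
      rw [← htv, ← h1t]; ring
    linarith [h, e.le, e.ge]
  nlinarith [key2]
end

section
/- Let D be an open real interval and f : D → ℝ. If there exists a : D → ℝ such that f(x) − f(u) ≥ a(u)(x−u) − φ(|x−u|) for all x,u ∈ D, then f is φ-convex on D. -/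
theorem stmt8 (D : Set ℝ) (hDo : IsOpen D) (hDc : Convex ℝ D)
    (φ : ℝ → ℝ) (f : ℝ → ℝ)
    (h : ∃ a : ℝ → ℝ, ∀ x ∈ D, ∀ u ∈ D, f x - f u ≥ a u * (x - u) - φ |x - u|) :
    PhiConvexOnReal D φ f := by
  obtain ⟨a, ha⟩ := h
  intro x hx y hy t ht
  obtain ⟨ht0, ht1⟩ := ht
  set u := t * x + (1 - t) * y with hu
  have huD : u ∈ D := hDc hx hy ht0 (by linarith) (by linarith)
  have h1 := ha x hx u huD
  have h2 := ha y hy u huD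
  have hxu : x - u = (1 - t) * (x - y) := by rw [hu]; ring
  have hyu : y - u = -t * (x - y) := by rw [hu]; ring
  have haxu : |x - u| = (1 - t) * |x - y| := by
    rw [hxu, abs_mul, abs_of_nonneg (by linarith)]
  have hayu : |y - u| = t * |x - y| := by
    rw [hyu, abs_mul, abs_neg, abs_of_nonneg ht0]
  rw [haxu, hxu] at h1
  rw [hayu, hyu] at h2
  nlinarith [mul_le_mul_of_nonneg_left h1 ht0,
    mul_le_mul_of_nonneg_left h2 (by linarith : (0:ℝ) ≤ 1 - t)]
end

section
/- Let D be a convex subset of a real normed space X and f : D → ℝ. If for every u ∈ D there exists an additive function A_u : X → ℝ such that f(x) − f(u) ≥ A_u(x−u) − φ(‖x−u‖) for all x ∈ D, then f is φ-midconvex, i.e., f((x+y)/2) ≤ (f(x)+f(y))/2 + φ(‖x−y‖/2) for all x,y ∈ D. -/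
theorem stmt10 {X : Type*} [NormedAddCommGroup X] [NormedSpace ℝ X]
    (D : Set X) (hD : Convex ℝ D) (φ : ℝ → ℝ) (f : X → ℝ)
    (h : ∀ u ∈ D, ∃ A : X → ℝ, (∀ x y : X, A (x + y) = A x + A y) ∧
          ∀ x ∈ D, f x - f u ≥ A (x - u) - φ ‖x - u‖) :
    ∀ x ∈ D, ∀ y ∈ D,
      f ((1/2 : ℝ) • (x + y)) ≤ (f x + f y) / 2 + φ (‖x - y‖ / 2) := by
  intro x hx y hy
  set u : X := (1/2 : ℝ) • (x + y) with hu
  have huD : u ∈ D := by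
    have h2 := hD hx hy (by norm_num : (0:ℝ) ≤ 1/2) (by norm_num : (0:ℝ) ≤ 1/2)
      (by norm_num)
    have : u = (1/2 : ℝ) • x + (1/2 : ℝ) • y := by rw [hu]; module
    rwa [this]
  obtain ⟨A, hadd, hA⟩ := h u huD
  have h0 : A 0 = 0 := by
    have := hadd 0 0; simpa using this
  have hopp : x - u = -(y - u) := by rw [hu]; module
  have hsum : A (x - u) + A (y - u) = 0 := by
    have := hadd (x - u) (y - u)
    rw [hopp] at this ⊢
    simpa [h0] using this.symm
  have hnx : ‖x - u‖ = ‖x - y‖ / 2 := by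
    have : x - u = (1/2 : ℝ) • (x - y) := by rw [hu]; module
    rw [this, norm_smul]; simp; ring
  have hny : ‖y - u‖ = ‖x - y‖ / 2 := by
    have : y - u = (-(1/2) : ℝ) • (x - y) := by rw [hu]; module
    rw [this, norm_smul]; simp; ring
  have h1 := hA x hx
  have h2 := hA y hy
  rw [hnx] at h1
  rw [hny] at h2
  linarith
end

section
/- Let φ : ℝ₊ → ℝ₊ be nondecreasing with φ(s) > 0 for s > 0 and γ := sup_{s>0} φ(2s)/φ(s) < 2. Then for all t ∈ ℝ and u ≥ 0, Σ_{n=0}^∞ φ(d_ℤ(2ⁿt)u)/2ⁿ ≤ (2/(2−γ)) · [ d_ℤ(t)·φ((1−d_ℤ(t))u) + (1−d_ℤ(t))·φ(d_ℤ(t)u) ]. -/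
noncomputable def dZ (t : ℝ) : ℝ := |t - (round t : ℤ)|

lemma dZ_nonneg (t : ℝ) : 0 ≤ dZ t := abs_nonneg _

lemma dZ_le_half (t : ℝ) : dZ t ≤ 1 / 2 := abs_sub_round t

lemma dZ_two_mul (t : ℝ) : dZ (2 * t) ≤ 2 * dZ t := by
  have h := round_le (2 * t) (2 * round t)
  calc dZ (2 * t) ≤ |2 * t - ((2 * round t : ℤ) : ℝ)| := h
    _ = 2 * dZ t := by
        push_cast
        rw [dZ, show (2:ℝ)*t - 2*(round t:ℤ) = 2*(t - (round t:ℤ)) by ring,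
          abs_mul, abs_two]

lemma dZ_pow_mul (t : ℝ) (n : ℕ) : dZ (2 ^ n * t) ≤ 2 ^ n * dZ t := by
  induction n with
  | zero => simp
  | succ n ih =>
      have : (2:ℝ) ^ (n+1) * t = 2 * (2 ^ n * t) := by ring
      rw [this]
      calc dZ (2 * (2 ^ n * t)) ≤ 2 * dZ (2 ^ n * t) := dZ_two_mul _
        _ ≤ 2 * (2 ^ n * dZ t) := by linarith [dZ_two_mul (2^n*t)]
        _ = 2 ^ (n+1) * dZ t := by ring

theorem stmt13 (φ : ℝ → ℝ) (hnn : ∀ s, 0 ≤ s → 0 ≤ φ s)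
    (hmono : ∀ s s' : ℝ, 0 ≤ s → s ≤ s' → φ s ≤ φ s')
    (hpos : ∀ s : ℝ, 0 < s → 0 < φ s)
    (γ : ℝ) (hγ2 : γ < 2)
    (hγ : IsLUB {r : ℝ | ∃ s : ℝ, 0 < s ∧ r = φ (2 * s) / φ s} γ) :
    ∀ t : ℝ, ∀ u : ℝ, 0 ≤ u →
      (∑' n : ℕ, φ (dZ (2 ^ n * t) * u) / 2 ^ n) ≤
        (2 / (2 - γ)) *
          (dZ t * φ ((1 - dZ t) * u) + (1 - dZ t) * φ (dZ t * u)) := by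
  intro t u hu
  have hγ1 : 1 ≤ γ := by
    have h1 : φ (2 * 1) / φ 1 ≤ γ := hγ.1 ⟨1, one_pos, rfl⟩
    have h2 : (1:ℝ) ≤ φ (2 * 1) / φ 1 :=
      (one_le_div (hpos 1 one_pos)).2 (hmono 1 (2*1) one_pos.le (by norm_num))
    linarith
  have hγ0 : 0 ≤ γ := by linarith
  have hdouble : ∀ s : ℝ, 0 < s → φ (2 * s) ≤ γ * φ s := by
    intro s hs
    have h1 : φ (2 * s) / φ s ≤ γ := hγ.1 ⟨s, hs, rfl⟩
    have := hpos s hs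
    rw [div_le_iff₀ this] at h1
    linarith [h1]
  have hiter : ∀ n : ℕ, ∀ s : ℝ, 0 ≤ s → φ (2 ^ n * s) ≤ γ ^ n * φ s := by
    intro n s hs
    rcases hs.eq_or_lt with h | h
    · subst h
      simpa using le_mul_of_one_le_left (hnn 0 le_rfl) (one_le_pow₀ hγ1)
    · induction n with
      | zero => simp
      | succ n ih =>
          have e : (2:ℝ) ^ (n+1) * s = 2 * (2 ^ n * s) := by ring
          rw [e]
          calc φ (2 * (2 ^ n * s)) ≤ γ * φ (2 ^ n * s) :=
                hdouble _ (by positivity)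
            _ ≤ γ * (γ ^ n * φ s) := by
                have := ih
                exact mul_le_mul_of_nonneg_left this hγ0
            _ = γ ^ (n+1) * φ s := by ring
  set d := dZ t with hd
  have hd0 : 0 ≤ d := dZ_nonneg t
  have hdh : d ≤ 1 / 2 := dZ_le_half t
  have hbound : ∀ n : ℕ, φ (dZ (2 ^ n * t) * u) ≤ γ ^ n * φ (d * u) := by
    intro n
    have h1 : dZ (2 ^ n * t) * u ≤ 2 ^ n * (d * u) := by
      have := dZ_pow_mul t n
      calc dZ (2 ^ n * t) * u ≤ (2 ^ n * d) * u :=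
            mul_le_mul_of_nonneg_right this hu
        _ = 2 ^ n * (d * u) := by ring
    calc φ (dZ (2 ^ n * t) * u) ≤ φ (2 ^ n * (d * u)) :=
          hmono _ _ (mul_nonneg (dZ_nonneg _) hu) h1
      _ ≤ γ ^ n * φ (d * u) := hiter n _ (mul_nonneg hd0 hu)
  have hr : γ / 2 < 1 := by linarith
  have hr0 : 0 ≤ γ / 2 := by linarith
  have hφdu : 0 ≤ φ (d * u) := hnn _ (mul_nonneg hd0 hu)
  have hg : Summable (fun n : ℕ => φ (d * u) * (γ / 2) ^ n) :=
    (summable_geometric_of_lt_one hr0 hr).mul_left _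
  have hge : ∀ n : ℕ, γ ^ n * φ (d * u) / 2 ^ n = φ (d * u) * (γ / 2) ^ n := by
    intro n; rw [div_pow]; ring
  have hfle : ∀ n : ℕ, φ (dZ (2 ^ n * t) * u) / 2 ^ n ≤ φ (d * u) * (γ / 2) ^ n := by
    intro n
    rw [← hge]
    exact div_le_div_of_nonneg_right (hbound n) (by positivity)
  have hf : Summable (fun n : ℕ => φ (dZ (2 ^ n * t) * u) / 2 ^ n) :=
    Summable.of_nonneg_of_le
      (fun n => div_nonneg (hnn _ (mul_nonneg (dZ_nonneg _) hu)) (by positivity))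
      hfle hg
  have hsum : (∑' n : ℕ, φ (dZ (2 ^ n * t) * u) / 2 ^ n) ≤
      φ (d * u) * (1 - γ / 2)⁻¹ := by
    calc (∑' n : ℕ, φ (dZ (2 ^ n * t) * u) / 2 ^ n)
        ≤ ∑' n : ℕ, φ (d * u) * (γ / 2) ^ n := Summable.tsum_le_tsum hfle hf hg
      _ = φ (d * u) * (1 - γ / 2)⁻¹ := by
          rw [tsum_mul_left, tsum_geometric_of_lt_one hr0 hr]
  have key : φ (d * u) ≤ d * φ ((1 - d) * u) + (1 - d) * φ (d * u) := by
    have h1 : φ (d * u) ≤ φ ((1 - d) * u) :=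
      hmono _ _ (mul_nonneg hd0 hu)
        (mul_le_mul_of_nonneg_right (by linarith) hu)
    nlinarith
  have hc0 : 0 < 2 - γ := by linarith
  have hinv : (1 - γ / 2)⁻¹ = 2 / (2 - γ) := by
    rw [show (1:ℝ) - γ/2 = (2-γ)/2 by ring, inv_div]
  calc (∑' n : ℕ, φ (dZ (2 ^ n * t) * u) / 2 ^ n)
      ≤ φ (d * u) * (1 - γ / 2)⁻¹ := hsum
    _ = (2 / (2 - γ)) * φ (d * u) := by rw [hinv]; ring
    _ ≤ (2 / (2 - γ)) * (d * φ ((1 - d) * u) + (1 - d) * φ (d * u)) :=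
        mul_le_mul_of_nonneg_left key (by positivity)
end

section
/- Let μ be a nonnegative, nonzero finite Borel measure on [0,1] and define χ(s) := (∫_{[0,1]} (2s)^p dμ(p)) / (∫_{[0,1]} s^p dμ(p)) for s > 0. Then χ is nondecreasing on (0,∞). -/
open MeasureTheory Real

/-- Log-convexity of `x ↦ ∫⁻ exp (x * p) dν` via Hölder. -/
lemma logconvex_aux (ν : Measure ℝ) (x y l : ℝ) (hl0 : 0 < l) (hl1 : l < 1) :
    (∫⁻ p, ENNReal.ofReal (Real.exp (((1 - l) * x + l * y) * p)) ∂ν) ≤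
      (∫⁻ p, ENNReal.ofReal (Real.exp (x * p)) ∂ν) ^ (1 - l) *
      (∫⁻ p, ENNReal.ofReal (Real.exp (y * p)) ∂ν) ^ l := by
  have hpq : (1 / (1 - l)).HolderConjugate (1 / l) := by
    rw [Real.holderConjugate_iff]; constructor
    · rw [lt_div_iff₀ (by linarith)]; linarith
    · simp only [one_div, inv_inv]; ring
  have hf : AEMeasurable (fun p : ℝ => ENNReal.ofReal (Real.exp (x * p)) ^ (1 - l)) ν :=
    (((measurable_const.mul measurable_id).exp.ennreal_ofReal).pow_const _).aemeasurable
  have hg : AEMeasurable (fun p : ℝ => ENNReal.ofReal (Real.exp (y * p)) ^ l) ν :=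
    (((measurable_const.mul measurable_id).exp.ennreal_ofReal).pow_const _).aemeasurable
  have key := ENNReal.lintegral_mul_le_Lp_mul_Lq ν hpq hf hg
  have heq : ∀ p : ℝ, ENNReal.ofReal (Real.exp (((1 - l) * x + l * y) * p)) =
      (ENNReal.ofReal (Real.exp (x * p)) ^ (1 - l)) * (ENNReal.ofReal (Real.exp (y * p)) ^ l) := by
    intro p
    rw [ENNReal.ofReal_rpow_of_pos (Real.exp_pos _), ENNReal.ofReal_rpow_of_pos (Real.exp_pos _),
      ← ENNReal.ofReal_mul (by positivity), ← Real.exp_mul, ← Real.exp_mul, ← Real.exp_add]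
    congr 1
    ring
  calc (∫⁻ p, ENNReal.ofReal (Real.exp (((1 - l) * x + l * y) * p)) ∂ν)
      = ∫⁻ p, ((fun p : ℝ => ENNReal.ofReal (Real.exp (x * p)) ^ (1 - l)) *
          (fun p : ℝ => ENNReal.ofReal (Real.exp (y * p)) ^ l)) p ∂ν := by
        simp only [Pi.mul_apply]; exact lintegral_congr fun p => heq p
    _ ≤ (∫⁻ p, (ENNReal.ofReal (Real.exp (x * p)) ^ (1 - l)) ^ (1 / (1 - l)) ∂ν) ^ (1 / (1 / (1 - l))) *
        (∫⁻ p, (ENNReal.ofReal (Real.exp (y * p)) ^ l) ^ (1 / l) ∂ν) ^ (1 / (1 / l)) := key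
    _ = (∫⁻ p, ENNReal.ofReal (Real.exp (x * p)) ∂ν) ^ (1 - l) *
        (∫⁻ p, ENNReal.ofReal (Real.exp (y * p)) ∂ν) ^ l := by
        rw [one_div_one_div, one_div_one_div]
        congr 1
        · congr 1
          refine lintegral_congr fun p => ?_
          rw [← ENNReal.rpow_mul, mul_one_div, div_self (by linarith), ENNReal.rpow_one]
        · congr 1
          refine lintegral_congr fun p => ?_
          rw [← ENNReal.rpow_mul, mul_one_div, div_self (by linarith), ENNReal.rpow_one]

theorem stmt14 (μ : Measure ℝ) [IsFiniteMeasure μ] (hμ : μ ≠ 0)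
    (hsupp : μ (Set.Icc (0:ℝ) 1)ᶜ = 0) :
    ∀ s₁ s₂ : ℝ, 0 < s₁ → s₁ ≤ s₂ →
      (∫ p in Set.Icc (0:ℝ) 1, (2 * s₁) ^ p ∂μ) /
        (∫ p in Set.Icc (0:ℝ) 1, s₁ ^ p ∂μ) ≤
      (∫ p in Set.Icc (0:ℝ) 1, (2 * s₂) ^ p ∂μ) /
        (∫ p in Set.Icc (0:ℝ) 1, s₂ ^ p ∂μ) := by
  intro s₁ s₂ hs₁ h12
  have hs₂ : 0 < s₂ := lt_of_lt_of_le hs₁ h12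
  set ν : Measure ℝ := μ.restrict (Set.Icc (0:ℝ) 1) with hν
  -- the measure of the interval is positive
  have hIcc : 0 < μ (Set.Icc (0:ℝ) 1) := by
    rcases eq_zero_or_pos (μ (Set.Icc (0:ℝ) 1)) with h | h
    · exfalso; apply hμ
      have : μ Set.univ = 0 := by
        have := measure_union_le (μ := μ) (Set.Icc (0:ℝ) 1) (Set.Icc (0:ℝ) 1)ᶜ
        rw [Set.union_compl_self, h, hsupp] at this
        simpa using this
      exact Measure.measure_univ_eq_zero.mp this
    · exact h
  set E : ℝ → ENNReal := fun x => ∫⁻ p, ENNReal.ofReal (Real.exp (x * p)) ∂ν with hE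
  -- E is finite
  have hEfin : ∀ x : ℝ, E x < ⊤ := by
    intro x
    have hb : ∀ᵐ p ∂ν, ENNReal.ofReal (Real.exp (x * p)) ≤ ENNReal.ofReal (Real.exp |x|) := by
      rw [hν, ae_restrict_iff' measurableSet_Icc]
      filter_upwards with p hp
      apply ENNReal.ofReal_le_ofReal
      apply Real.exp_le_exp.mpr
      calc x * p ≤ |x| * p := mul_le_mul_of_nonneg_right (le_abs_self x) hp.1
        _ ≤ |x| * 1 := mul_le_mul_of_nonneg_left hp.2 (abs_nonneg x)
        _ = |x| := mul_one _
    calc E x ≤ ∫⁻ _, ENNReal.ofReal (Real.exp |x|) ∂ν := lintegral_mono_ae hb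
      _ = ENNReal.ofReal (Real.exp |x|) * ν Set.univ := lintegral_const _
      _ < ⊤ := ENNReal.mul_lt_top ENNReal.ofReal_lt_top
          (lt_of_le_of_lt (Measure.restrict_le_self _) (measure_lt_top μ _))
  -- E is positive
  have hEpos : ∀ x : ℝ, 0 < E x := by
    intro x
    have hb : ∀ᵐ p ∂ν, ENNReal.ofReal (Real.exp (-|x|)) ≤ ENNReal.ofReal (Real.exp (x * p)) := by
      rw [hν, ae_restrict_iff' measurableSet_Icc]
      filter_upwards with p hp
      apply ENNReal.ofReal_le_ofReal
      apply Real.exp_le_exp.mpr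
      calc -|x| = -|x| * 1 := (mul_one _).symm
        _ ≤ -|x| * p := by
            rcases le_or_gt p 1 with h | h
            · exact mul_le_mul_of_nonpos_left h (neg_nonpos.mpr (abs_nonneg x))
            · linarith [hp.2]
        _ ≤ x * p := mul_le_mul_of_nonneg_right (neg_abs_le x) hp.1
    calc (0 : ENNReal) < ENNReal.ofReal (Real.exp (-|x|)) * ν Set.univ := by
          apply ENNReal.mul_pos
          · simp [Real.exp_pos]
          · rw [hν, Measure.restrict_apply_univ]
            exact hIcc.ne'
      _ = ∫⁻ _, ENNReal.ofReal (Real.exp (-|x|)) ∂ν := (lintegral_const _).symm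
      _ ≤ E x := lintegral_mono_ae hb
  -- key multiplicative inequality
  have key : ∀ a b c : ℝ, a ≤ b → 0 < c → E (a + c) * E b ≤ E a * E (b + c) := by
    intro a b c hab hc
    rcases eq_or_lt_of_le hab with rfl | hab
    · rw [mul_comm]
    · set L : ℝ := b + c - a with hL
      have hLpos : 0 < L := by simp only [hL]; linarith
      set l : ℝ := c / L with hl
      have hl0 : 0 < l := div_pos hc hLpos
      have hl1 : l < 1 := (div_lt_one hLpos).mpr (by linarith)
      have e1 : a + c = (1 - l) * a + l * (b + c) := by
        rw [hl]; field_simp [hLpos.ne']; rw [hL]; ring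
      have e2 : b = (1 - l) * (b + c) + l * a := by
        rw [hl]; field_simp [hLpos.ne']; rw [hL]; ring
      have h1 : E (a + c) ≤ E a ^ (1 - l) * E (b + c) ^ l := by
        have := logconvex_aux ν a (b + c) l hl0 hl1
        rw [← e1] at this; exact this
      have h2 : E b ≤ E (b + c) ^ (1 - l) * E a ^ l := by
        have := logconvex_aux ν (b + c) a l hl0 hl1
        rw [← e2] at this; exact this
      calc E (a + c) * E b ≤ (E a ^ (1 - l) * E (b + c) ^ l) * (E (b + c) ^ (1 - l) * E a ^ l) :=
            mul_le_mul' h1 h2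
        _ = (E a ^ (1 - l) * E a ^ l) * (E (b + c) ^ l * E (b + c) ^ (1 - l)) := by ring
        _ = E a * E (b + c) := by
            rw [← ENNReal.rpow_add _ _ (hEpos a).ne' (hEfin a).ne,
              ← ENNReal.rpow_add _ _ (hEpos (b+c)).ne' (hEfin (b+c)).ne]
            norm_num
  -- rewrite the Bochner integrals in terms of E
  have hInt : ∀ s : ℝ, 0 < s → (∫ p in Set.Icc (0:ℝ) 1, s ^ p ∂μ) = (E (Real.log s)).toReal := by
    intro s hs
    have h1 : (∫ p in Set.Icc (0:ℝ) 1, s ^ p ∂μ) = ∫ p, Real.exp (Real.log s * p) ∂ν := by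
      rw [hν]
      refine integral_congr_ae (Filter.Eventually.of_forall fun p => ?_)
      rw [Real.rpow_def_of_pos hs]
    rw [h1, hE]
    rw [integral_eq_lintegral_of_nonneg_ae (Filter.Eventually.of_forall fun p => (Real.exp_pos _).le)
      ((by fun_prop : Measurable fun p : ℝ => Real.exp (Real.log s * p)).aestronglyMeasurable)]
  have hlog2 : Real.log (2 * s₁) = Real.log 2 + Real.log s₁ := Real.log_mul (by norm_num) hs₁.ne'
  have hlog2' : Real.log (2 * s₂) = Real.log 2 + Real.log s₂ := Real.log_mul (by norm_num) hs₂.ne'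
  rw [hInt s₁ hs₁, hInt s₂ hs₂, hInt (2*s₁) (by linarith), hInt (2*s₂) (by linarith),
    hlog2, hlog2']
  have hEt : ∀ x : ℝ, 0 < (E x).toReal :=
    fun x => ENNReal.toReal_pos (hEpos x).ne' (hEfin x).ne
  rw [div_le_div_iff₀ (hEt _) (hEt _)]
  have hmain := key (Real.log s₁) (Real.log s₂) (Real.log 2)
    (Real.log_le_log hs₁ h12) (Real.log_pos (by norm_num))
  have := ENNReal.toReal_mono (by
      exact ENNReal.mul_ne_top (hEfin _).ne (hEfin _).ne) hmain
  rw [ENNReal.toReal_mul, ENNReal.toReal_mul] at this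
  calc (E (Real.log 2 + Real.log s₁)).toReal * (E (Real.log s₂)).toReal
      = (E (Real.log s₁ + Real.log 2)).toReal * (E (Real.log s₂)).toReal := by rw [add_comm]
    _ ≤ (E (Real.log s₁)).toReal * (E (Real.log s₂ + Real.log 2)).toReal := this
    _ = (E (Real.log 2 + Real.log s₂)).toReal * (E (Real.log s₁)).toReal := by
        rw [add_comm (Real.log s₂)]; ring
end

section
/- Let μ be a nonnegative, nonzero finite Borel measure on [0,1], p₀ := sup(supp μ), and χ(s) := (∫_{[0,1]} (2s)^p dμ(p)) / (∫_{[0,1]} s^p dμ(p)). Then lim_{s→∞} χ(s) = 2^{p₀}. -/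
open MeasureTheory Filter

def measSupp (μ : Measure ℝ) : Set ℝ :=
  {x : ℝ | ∀ U : Set ℝ, IsOpen U → x ∈ U → 0 < μ U}

theorem stmt15 (μ : Measure ℝ) [IsFiniteMeasure μ] (hμ : μ ≠ 0)
    (hsupp : μ (Set.Icc (0:ℝ) 1)ᶜ = 0)
    (p₀ : ℝ) (hp₀ : p₀ = sSup (measSupp μ)) :
    Tendsto (fun s : ℝ =>
        (∫ p in Set.Icc (0:ℝ) 1, (2 * s) ^ p ∂μ) /
          (∫ p in Set.Icc (0:ℝ) 1, s ^ p ∂μ))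
      atTop (nhds ((2:ℝ) ^ p₀)) := by
  set S := measSupp μ with hSdef
  -- complement of support is null, and support is closed
  have hcov : Sᶜ = ⋃₀ {U : Set ℝ | IsOpen U ∧ μ U = 0} := by
    ext x
    constructor
    · intro hx
      simp only [hSdef, measSupp, Set.mem_compl_iff, Set.mem_setOf_eq] at hx
      push_neg at hx
      obtain ⟨U, hU, hxU, hμU⟩ := hx
      exact ⟨U, ⟨hU, le_antisymm hμU (zero_le)⟩, hxU⟩
    · rintro ⟨U, ⟨h1, h3⟩, h2⟩ hxS
      exact absurd h3 (ne_of_gt (hxS U h1 h2))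
  have hSc : μ Sᶜ = 0 := by
    obtain ⟨T, hTc, hTsub, hTeq⟩ :=
      TopologicalSpace.isOpen_sUnion_countable {U : Set ℝ | IsOpen U ∧ μ U = 0}
        (fun s hs => hs.1)
    rw [hcov, ← hTeq, measure_sUnion_null_iff hTc]
    exact fun s hs => (hTsub hs).2
  have hSclosed : IsClosed S := by
    rw [← isOpen_compl_iff, hcov]
    exact isOpen_sUnion fun s hs => hs.1
  -- support sits inside [0,1]
  have hSsub : S ⊆ Set.Icc (0:ℝ) 1 := by
    intro x hx
    by_contra hxI
    have := hx (Set.Icc (0:ℝ) 1)ᶜ (isClosed_Icc).isOpen_compl hxI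
    rw [hsupp] at this
    exact lt_irrefl _ this
  have hSne : S.Nonempty := by
    by_contra h
    rw [Set.not_nonempty_iff_eq_empty] at h
    have : μ Set.univ = 0 := by
      have : Sᶜ = Set.univ := by rw [h, Set.compl_empty]
      rw [← this]; exact hSc
    exact hμ (Measure.measure_univ_eq_zero.mp this)
  have hScomp : IsCompact S := isCompact_Icc.of_isClosed_subset hSclosed hSsub
  have hp₀mem : p₀ ∈ S := hp₀ ▸ hScomp.sSup_mem hSne
  have hle : ∀ p ∈ S, p ≤ p₀ := fun p hp => hp₀ ▸ le_csSup hScomp.bddAbove hp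
  have hp₀I : p₀ ∈ Set.Icc (0:ℝ) 1 := hSsub hp₀mem
  -- the restricted measure
  set ν := μ.restrict (Set.Icc (0:ℝ) 1) with hνdef
  have hνS : ν Sᶜ = 0 := by
    rw [hνdef, Measure.restrict_apply hSclosed.measurableSet.compl]
    exact measure_mono_null Set.inter_subset_left hSc
  have haeI : ∀ᵐ p ∂ν, p ∈ Set.Icc (0:ℝ) 1 := ae_restrict_mem measurableSet_Icc
  have haeS : ∀ᵐ p ∂ν, p ∈ S :=
    (measure_eq_zero_iff_ae_notMem.mp hνS).mono fun p hp => not_not.mp hp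
  have haele : ∀ᵐ p ∂ν, p ≤ p₀ := haeS.mono fun p hp => hle p hp
  -- total mass
  set c' := (ν Set.univ).toReal with hc'def
  have hμI : 0 < μ (Set.Icc (0:ℝ) 1) := by
    by_contra h
    push_neg at h
    have h0 : μ (Set.Icc (0:ℝ) 1) = 0 := le_antisymm h (zero_le)
    have : μ Set.univ = 0 := by
      have := measure_union_le (μ := μ) (Set.Icc (0:ℝ) 1) (Set.Icc (0:ℝ) 1)ᶜ
      rw [Set.union_compl_self, h0, hsupp] at this
      simpa using this
    exact hμ (Measure.measure_univ_eq_zero.mp this)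
  have hc' : 0 < c' := by
    rw [hc'def, hνdef, Measure.restrict_apply_univ]
    exact ENNReal.toReal_pos hμI.ne' (measure_ne_top μ _)
  -- integrability
  have hint : ∀ s : ℝ, 0 < s → Integrable (fun p : ℝ => s ^ p) ν := by
    intro s hs
    have hco : Continuous (fun p : ℝ => s ^ p) :=
      continuous_const.rpow continuous_id fun _ => Or.inl hs.ne'
    exact hco.continuousOn.integrableOn_compact isCompact_Icc
  -- positivity of Icc-neighborhoods of p₀
  have hposIcc : ∀ η : ℝ, 0 < η → 0 < ν (Set.Icc (p₀ - η) p₀) := by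
    intro η hη
    have hU : 0 < μ (Set.Ioo (p₀ - η) (p₀ + η)) :=
      hp₀mem (Set.Ioo (p₀ - η) (p₀ + η)) isOpen_Ioo (by constructor <;> linarith)
    have hUν : 0 < ν (Set.Ioo (p₀ - η) (p₀ + η)) := by
      rw [hνdef, Measure.restrict_apply measurableSet_Ioo]
      by_contra h
      push_neg at h
      have h0 : μ (Set.Ioo (p₀ - η) (p₀ + η) ∩ Set.Icc 0 1) = 0 := le_antisymm h (zero_le)
      have : μ (Set.Ioo (p₀ - η) (p₀ + η)) = 0 := by
        have hsub2 : Set.Ioo (p₀ - η) (p₀ + η) ⊆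
            (Set.Ioo (p₀ - η) (p₀ + η) ∩ Set.Icc 0 1) ∪ (Set.Icc (0:ℝ) 1)ᶜ := by
          intro x hx
          by_cases hx1 : x ∈ Set.Icc (0:ℝ) 1
          · exact Or.inl ⟨hx, hx1⟩
          · exact Or.inr hx1
        have := (measure_mono hsub2).trans (measure_union_le (μ := μ) _ _)
        rw [h0, hsupp] at this
        simpa using this
      exact absurd this hU.ne'
    have hνIoi : ν (Set.Ioi p₀) = 0 := by
      refine measure_mono_null (fun x hx => ?_) hνS
      intro hxS
      exact absurd (hle x hxS) (not_le.mpr hx)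
    have hsub3 : Set.Ioo (p₀ - η) (p₀ + η) ⊆ Set.Icc (p₀ - η) p₀ ∪ Set.Ioi p₀ := by
      intro x hx
      by_cases hxp : x ≤ p₀
      · exact Or.inl ⟨hx.1.le, hxp⟩
      · exact Or.inr (not_le.mp hxp)
    calc 0 < ν (Set.Ioo (p₀ - η) (p₀ + η)) := hUν
      _ ≤ ν (Set.Icc (p₀ - η) p₀ ∪ Set.Ioi p₀) := measure_mono hsub3
      _ ≤ ν (Set.Icc (p₀ - η) p₀) + ν (Set.Ioi p₀) := measure_union_le _ _
      _ = ν (Set.Icc (p₀ - η) p₀) := by rw [hνIoi, add_zero]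
  -- lower bound for the denominator
  have hJ1 : ∀ s : ℝ, 1 ≤ s → c' ≤ ∫ p, s ^ p ∂ν := by
    intro s hs
    have h1 : (∫ _ : ℝ, (1:ℝ) ∂ν) = c' := by
      rw [integral_const, smul_eq_mul, mul_one]; rfl
    rw [← h1]
    refine integral_mono_ae (integrable_const 1) (hint s (by linarith)) ?_
    filter_upwards [haeI] with p hp
    calc (1:ℝ) = s ^ (0:ℝ) := (Real.rpow_zero s).symm
      _ ≤ s ^ p := Real.rpow_le_rpow_of_exponent_le hs hp.1
  have hJpos : ∀ s : ℝ, 1 ≤ s → 0 < ∫ p, s ^ p ∂ν := fun s hs => lt_of_lt_of_le hc' (hJ1 s hs)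
  -- upper bound: K ≤ 2^p₀ * J
  have hKJ : ∀ s : ℝ, 1 ≤ s →
      (∫ p, (2 * s) ^ p ∂ν) ≤ 2 ^ p₀ * ∫ p, s ^ p ∂ν := by
    intro s hs
    have hs0 : (0:ℝ) ≤ s := by linarith
    rw [← integral_const_mul]
    refine integral_mono_ae (hint (2 * s) (by linarith)) ((hint s (by linarith)).const_mul _) ?_
    filter_upwards [haele] with p hp
    rw [Real.mul_rpow (by norm_num) hs0]
    exact mul_le_mul_of_nonneg_right
      (Real.rpow_le_rpow_of_exponent_le one_le_two hp) (Real.rpow_nonneg hs0 p)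
  rw [tendsto_order]
  constructor
  · -- lower bound direction
    intro a ha
    -- choose δ > 0 with a < 2 ^ (p₀ - δ)
    have hcont2 : Tendsto (fun δ : ℝ => (2:ℝ) ^ (p₀ - δ)) (nhdsWithin 0 (Set.Ioi 0))
        (nhds ((2:ℝ) ^ p₀)) := by
      have hco : Continuous fun δ : ℝ => (2:ℝ) ^ (p₀ - δ) :=
        continuous_const.rpow (continuous_const.sub continuous_id) fun _ => Or.inl two_ne_zero
      have := (hco.tendsto 0).mono_left (nhdsWithin_le_nhds (s := Set.Ioi (0:ℝ)))
      simpa using this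
    obtain ⟨δ, hδa, hδpos⟩ :=
      ((hcont2.eventually (eventually_gt_nhds ha)).and self_mem_nhdsWithin).exists
    have hδpos' : (0:ℝ) < δ := hδpos
    set A := Set.Icc (p₀ - δ) p₀ with hAdef
    set A' := Set.Icc (p₀ - δ / 2) p₀ with hA'def
    set m := (ν A').toReal with hmdef
    have hm : 0 < m :=
      ENNReal.toReal_pos (hposIcc (δ / 2) (by linarith [hδpos'])).ne' (measure_ne_top ν _)
    -- the comparison function g
    have hg : Tendsto (fun s : ℝ => (2:ℝ) ^ (p₀ - δ) * (1 - c' / m * s ^ (-(δ / 2))))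
        atTop (nhds ((2:ℝ) ^ (p₀ - δ))) := by
      have h0 : Tendsto (fun s : ℝ => s ^ (-(δ / 2))) atTop (nhds 0) :=
        tendsto_rpow_neg_atTop (by linarith [hδpos'])
      have h1 : Tendsto (fun s : ℝ => 1 - c' / m * s ^ (-(δ / 2))) atTop (nhds (1 - c' / m * 0)) :=
        (tendsto_const_nhds (x := (1:ℝ))).sub (h0.const_mul (c' / m))
      have h2 := h1.const_mul ((2:ℝ) ^ (p₀ - δ))
      simpa using h2
    filter_upwards [eventually_ge_atTop 1, hg.eventually (eventually_gt_nhds hδa)] with s hs1 hgs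
    have hs0 : (0:ℝ) < s := by linarith
    set J := ∫ p, s ^ p ∂ν with hJdef
    set K := ∫ p, (2 * s) ^ p ∂ν with hKdef
    set E := ∫ p in Aᶜ, s ^ p ∂ν with hEdef
    have hJp : 0 < J := hJpos s hs1
    -- E ≤ s^(p₀-δ) * c'
    have hE : E ≤ s ^ (p₀ - δ) * c' := by
      have h1 : E ≤ ∫ _ in Aᶜ, s ^ (p₀ - δ) ∂ν := by
        refine integral_mono_ae ((hint s hs0).restrict) (integrable_const _) ?_
        filter_upwards [ae_restrict_mem measurableSet_Icc.compl,
          ae_restrict_of_ae haele] with p hpA hpl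
        have : p ≤ p₀ - δ := by
          by_contra h
          push_neg at h
          exact hpA ⟨h.le, hpl⟩
        exact Real.rpow_le_rpow_of_exponent_le hs1 this
      refine h1.trans ?_
      rw [setIntegral_const, smul_eq_mul, mul_comm]
      refine mul_le_mul_of_nonneg_left ?_ (Real.rpow_nonneg hs0.le _)
      exact ENNReal.toReal_mono (measure_ne_top ν _) (measure_mono (Set.subset_univ _))
    -- J ≥ s^(p₀-δ/2) * m
    have hJlow : s ^ (p₀ - δ / 2) * m ≤ J := by
      have h1 : s ^ (p₀ - δ / 2) * m = ∫ _ in A', s ^ (p₀ - δ / 2) ∂ν := by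
        rw [setIntegral_const, smul_eq_mul, mul_comm]; rfl
      rw [h1]
      have h2 : (∫ _ in A', s ^ (p₀ - δ / 2) ∂ν) ≤ ∫ p in A', s ^ p ∂ν := by
        refine integral_mono_ae (integrable_const _) ((hint s hs0).restrict) ?_
        filter_upwards [ae_restrict_mem measurableSet_Icc] with p hpA
        exact Real.rpow_le_rpow_of_exponent_le hs1 hpA.1
      refine h2.trans ?_
      exact setIntegral_le_integral (hint s hs0)
        (Filter.Eventually.of_forall fun p => Real.rpow_nonneg hs0.le p)
    -- K ≥ 2^(p₀-δ) * (J - E)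
    have hsplit : (∫ p in A, s ^ p ∂ν) = J - E := by
      have := integral_add_compl (measurableSet_Icc (a := p₀ - δ) (b := p₀)) (hint s hs0)
      rw [hEdef, hJdef]
      linarith [this]
    have hKlow : 2 ^ (p₀ - δ) * (J - E) ≤ K := by
      rw [← hsplit]
      have h1 : 2 ^ (p₀ - δ) * (∫ p in A, s ^ p ∂ν) = ∫ p in A, 2 ^ (p₀ - δ) * s ^ p ∂ν := by
        rw [integral_const_mul]
      rw [h1]
      have h2 : (∫ p in A, 2 ^ (p₀ - δ) * s ^ p ∂ν) ≤ ∫ p in A, (2 * s) ^ p ∂ν := by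
        refine integral_mono_ae (((hint s hs0).restrict).const_mul _)
          ((hint (2 * s) (by linarith)).restrict) ?_
        filter_upwards [ae_restrict_mem measurableSet_Icc] with p hpA
        rw [Real.mul_rpow (by norm_num) hs0.le]
        exact mul_le_mul_of_nonneg_right
          (Real.rpow_le_rpow_of_exponent_le one_le_two hpA.1) (Real.rpow_nonneg hs0.le p)
      refine h2.trans ?_
      exact setIntegral_le_integral (hint (2 * s) (by linarith))
        (Filter.Eventually.of_forall fun p => Real.rpow_nonneg (by linarith) p)
    -- E / J ≤ (c'/m) * s^(-(δ/2))
    have hEJ : E / J ≤ c' / m * s ^ (-(δ / 2)) := by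
      have h1 : E / J ≤ (s ^ (p₀ - δ) * c') / (s ^ (p₀ - δ / 2) * m) := by
        refine div_le_div₀ (by positivity) hE ?_ hJlow
        positivity
      refine h1.trans_eq ?_
      have h2 : s ^ (p₀ - δ) = s ^ (p₀ - δ / 2) * s ^ (-(δ / 2)) := by
        rw [← Real.rpow_add hs0]; ring_nf
      rw [h2]
      have hne1 : s ^ (p₀ - δ / 2) ≠ 0 := by positivity
      field_simp
    -- conclude
    have hfinal : a < K / J := by
      have h1 : a < 2 ^ (p₀ - δ) * (1 - E / J) := by
        refine hgs.trans_le ?_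
        exact mul_le_mul_of_nonneg_left (by linarith) (by positivity)
      have h2 : 2 ^ (p₀ - δ) * (1 - E / J) = (2 ^ (p₀ - δ) * (J - E)) / J := by
        field_simp
      rw [h2] at h1
      refine h1.trans_le ?_
      exact div_le_div_of_nonneg_right hKlow hJp.le
    exact hfinal
  · -- upper bound direction
    intro a ha
    filter_upwards [eventually_ge_atTop 1] with s hs1
    have hJp := hJpos s hs1
    calc (∫ p, (2 * s) ^ p ∂ν) / (∫ p, s ^ p ∂ν) ≤ 2 ^ p₀ :=
        (div_le_iff₀ hJp).mpr (hKJ s hs1)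
      _ < a := ha
end

section
/- For every constant 0 ≤ p ≤ 1 and all t ∈ [0,1], t(1−t)^p + (1−t)t^p ≤ T_p(t), where T_p(t) := Σ_{n=0}^∞ (d_ℤ(2ⁿt))^p / 2ⁿ and d_ℤ(s) := dist(s,ℤ). -/
namespace Stmt17Aux

noncomputable def F (p t : ℝ) : ℝ := t * (1 - t) ^ p + (1 - t) * t ^ p

lemma dZ_nonneg (x : ℝ) : 0 ≤ dZ x := abs_nonneg _

lemma dZ_le_half (x : ℝ) : dZ x ≤ 1 / 2 := abs_sub_round x

lemma dZ_fract (x : ℝ) : dZ (Int.fract x) = dZ x := by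
  unfold dZ
  rw [Int.fract, round_sub_intCast]
  push_cast
  ring_nf

lemma rpow_subadd {p : ℝ} (hp0 : 0 ≤ p) (hp1 : p ≤ 1) {a b : ℝ}
    (ha : 0 ≤ a) (hb : 0 ≤ b) : (a + b) ^ p ≤ a ^ p + b ^ p := by
  have h := NNReal.rpow_add_le_add_rpow a.toNNReal b.toNNReal hp0 hp1
  have h2 := NNReal.coe_le_coe.2 h
  push_cast [Real.coe_toNNReal _ ha, Real.coe_toNNReal _ hb] at h2
  exact h2

lemma F_symm (p t : ℝ) : F p (1 - t) = F p t := by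
  unfold F
  rw [show (1:ℝ) - (1 - t) = t by ring]
  ring

lemma key1 {p : ℝ} (hp0 : 0 ≤ p) (hp1 : p ≤ 1) {t : ℝ} (h0 : 0 ≤ t)
    (h1 : t ≤ 1 / 2) : F p t ≤ t ^ p + F p (2 * t) / 2 := by
  unfold F
  have hsub : (1 - t) ^ p ≤ (1 - 2 * t) ^ p + t ^ p := by
    have := rpow_subadd hp0 hp1 (a := 1 - 2 * t) (b := t) (by linarith) h0
    rw [show (1 - 2 * t) + t = 1 - t by ring] at this
    exact this
  have ha : 0 ≤ t ^ p := Real.rpow_nonneg h0 p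
  have hd : 0 ≤ (2 * t) ^ p := Real.rpow_nonneg (by linarith) p
  have hb : t * (1 - t) ^ p ≤ t * ((1 - 2 * t) ^ p + t ^ p) :=
    mul_le_mul_of_nonneg_left hsub h0
  rw [show (1:ℝ) - 2 * t = 1 - 2 * t by ring]
  nlinarith [mul_nonneg (by linarith : (0:ℝ) ≤ 1 - 2 * t) hd]

lemma key2 {p : ℝ} (hp0 : 0 ≤ p) (hp1 : p ≤ 1) {t : ℝ} (h0 : 1 / 2 ≤ t)
    (h1 : t ≤ 1) : F p t ≤ (1 - t) ^ p + F p (2 * t - 1) / 2 := by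
  have h := key1 hp0 hp1 (t := 1 - t) (by linarith) (by linarith)
  rw [F_symm] at h
  rw [show 2 * (1 - t) = 1 - (2 * t - 1) by ring, F_symm] at h
  exact h

lemma keyK {p : ℝ} (hp0 : 0 ≤ p) (hp1 : p ≤ 1) (s : ℝ) :
    F p (Int.fract s) ≤ dZ s ^ p + F p (Int.fract (2 * s)) / 2 := by
  set u := Int.fract s with hu
  have hu0 : 0 ≤ u := Int.fract_nonneg s
  have hu1 : u < 1 := Int.fract_lt_one s
  have hfs : Int.fract (2 * s) = Int.fract (2 * u) := by
    refine Int.fract_eq_fract.2 ⟨2 * ⌊s⌋, ?_⟩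
    rw [hu, Int.fract]
    push_cast
    ring
  rw [← dZ_fract s, ← hu, hfs]
  rcases lt_or_ge u (1/2) with h | h
  · have : Int.fract (2 * u) = 2 * u := Int.fract_eq_self.2 ⟨by linarith, by linarith⟩
    rw [this, dZ, show round u = 0 by rw [round_eq]; exact_mod_cast Int.floor_eq_zero_iff.2 ⟨by linarith, by linarith⟩]
    rw [Int.cast_zero, sub_zero, abs_of_nonneg hu0]
    exact key1 hp0 hp1 hu0 h.le
  · have hfr : Int.fract (2 * u) = 2 * u - 1 := by
      have h1 : Int.fract (2 * u - 1) = 2 * u - 1 :=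
        Int.fract_eq_self.2 ⟨by linarith, by linarith⟩
      have h2 : Int.fract (2 * u) = Int.fract (2 * u - 1) :=
        Int.fract_eq_fract.2 ⟨1, by push_cast; ring⟩
      rw [h2, h1]
    have hdz : dZ u = 1 - u := by
      rw [dZ, show round u = 1 by
        rw [round_eq]
        exact_mod_cast Int.floor_eq_iff.2 ⟨by push_cast; linarith, by push_cast; linarith⟩]
      rw [Int.cast_one, abs_of_nonpos (by linarith), neg_sub]
    rw [hfr, hdz]
    exact key2 hp0 hp1 h hu1.le

lemma iterate {p : ℝ} (hp0 : 0 ≤ p) (hp1 : p ≤ 1) (t : ℝ) :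
    ∀ N : ℕ, F p (Int.fract t) ≤
      (∑ n ∈ Finset.range N, dZ (2 ^ n * t) ^ p / 2 ^ n) +
        F p (Int.fract (2 ^ N * t)) / 2 ^ N := by
  intro N
  induction N with
  | zero => simp
  | succ N ih =>
    have h := keyK hp0 hp1 (2 ^ N * t)
    rw [show 2 * (2 ^ N * t) = 2 ^ (N + 1) * t by ring] at h
    have h2N : (0:ℝ) < 2 ^ N := by positivity
    calc F p (Int.fract t) ≤ _ := ih
      _ ≤ (∑ n ∈ Finset.range N, dZ (2 ^ n * t) ^ p / 2 ^ n) +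
          (dZ (2 ^ N * t) ^ p + F p (Int.fract (2 ^ (N + 1) * t)) / 2) / 2 ^ N := by
        gcongr
      _ = _ := by
        rw [Finset.sum_range_succ]
        ring

end Stmt17Aux

theorem stmt17 (p : ℝ) (hp0 : 0 ≤ p) (hp1 : p ≤ 1) :
    ∀ t ∈ Set.Icc (0:ℝ) 1,
      t * (1 - t) ^ p + (1 - t) * t ^ p ≤
        ∑' n : ℕ, (dZ (2 ^ n * t)) ^ p / 2 ^ n := by
  intro t ht
  obtain ⟨ht0, ht1⟩ := ht
  have hterm_nonneg : ∀ n : ℕ, 0 ≤ dZ (2 ^ n * t) ^ p / 2 ^ n := fun n => by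
    have := Stmt17Aux.dZ_nonneg (2 ^ n * t)
    positivity
  have hterm_le : ∀ n : ℕ, dZ (2 ^ n * t) ^ p / 2 ^ n ≤ (1/2 : ℝ) ^ n := fun n => by
    have h1 : dZ (2 ^ n * t) ^ p ≤ 1 :=
      Real.rpow_le_one (Stmt17Aux.dZ_nonneg _)
        ((Stmt17Aux.dZ_le_half _).trans (by norm_num)) hp0
    calc dZ (2 ^ n * t) ^ p / 2 ^ n ≤ 1 / 2 ^ n := by
          gcongr
      _ = (1/2 : ℝ) ^ n := by rw [div_pow, one_pow]
  have hsum : Summable (fun n : ℕ => dZ (2 ^ n * t) ^ p / 2 ^ n) :=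
    Summable.of_nonneg_of_le hterm_nonneg hterm_le summable_geometric_two
  have hFt : Stmt17Aux.F p (Int.fract t) = t * (1 - t) ^ p + (1 - t) * t ^ p := by
    rcases ht1.lt_or_eq with h | h
    · rw [Int.fract_eq_self.2 ⟨ht0, h⟩, Stmt17Aux.F]
    · subst h
      rw [Int.fract_one, Stmt17Aux.F]
      norm_num
  have hFbound : ∀ s : ℝ, 0 ≤ s → s ≤ 1 → Stmt17Aux.F p s ≤ 2 := by
    intro s h0 h1
    have e1 : s * (1 - s) ^ p ≤ 1 :=
      mul_le_one₀ h1 (Real.rpow_nonneg (by linarith) p)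
        (Real.rpow_le_one (by linarith) (by linarith) hp0)
    have e2 : (1 - s) * s ^ p ≤ 1 :=
      mul_le_one₀ (by linarith) (Real.rpow_nonneg h0 p)
        (Real.rpow_le_one h0 h1 hp0)
    rw [Stmt17Aux.F]; linarith
  have hmain : ∀ N : ℕ, t * (1 - t) ^ p + (1 - t) * t ^ p ≤
      (∑' n : ℕ, dZ (2 ^ n * t) ^ p / 2 ^ n) + 2 / 2 ^ N := by
    intro N
    have h1 := Stmt17Aux.iterate hp0 hp1 t N
    rw [hFt] at h1
    have h2 : (∑ n ∈ Finset.range N, dZ (2 ^ n * t) ^ p / 2 ^ n) ≤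
        ∑' n : ℕ, dZ (2 ^ n * t) ^ p / 2 ^ n :=
      Summable.sum_le_tsum (Finset.range N) (fun i _ => hterm_nonneg i) hsum
    have h3 : Stmt17Aux.F p (Int.fract (2 ^ N * t)) / 2 ^ N ≤ 2 / 2 ^ N := by
      gcongr
      · exact hFbound _ (Int.fract_nonneg _) (Int.fract_lt_one _).le
    linarith
  have hlim : Filter.Tendsto (fun N : ℕ =>
      (∑' n : ℕ, dZ (2 ^ n * t) ^ p / 2 ^ n) + 2 / 2 ^ N) Filter.atTop
      (nhds ((∑' n : ℕ, dZ (2 ^ n * t) ^ p / 2 ^ n) + 0)) := by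
    apply Filter.Tendsto.const_add
    have : ∀ N : ℕ, 2 / (2:ℝ) ^ N = 2 * (1/2 : ℝ) ^ N := fun N => by
      rw [div_pow, one_pow]; ring
    simp only [this]
    simpa using (tendsto_pow_atTop_nhds_zero_of_lt_one (by norm_num : (0:ℝ) ≤ 1/2)
      (by norm_num : (1/2:ℝ) < 1)).const_mul (2:ℝ)
  have := ge_of_tendsto' hlim hmain
  simpa using this
end

section
/- For every constant 0 ≤ p < 1 and all t ∈ [0,1], T_p(t) ≤ (2/(2−2^p)) · ( t(1−t)^p + (1−t)t^p ), where T_p(t) := Σ_{n=0}^∞ (d_ℤ(2ⁿt))^p / 2ⁿ and d_ℤ(s) := dist(s,ℤ). -/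
theorem stmt18 (p : ℝ) (hp0 : 0 ≤ p) (hp1 : p < 1) :
    ∀ t ∈ Set.Icc (0:ℝ) 1,
      (∑' n : ℕ, (dZ (2 ^ n * t)) ^ p / 2 ^ n) ≤
        (2 / (2 - 2 ^ p)) * (t * (1 - t) ^ p + (1 - t) * t ^ p) := by
  intro t ht
  obtain ⟨ht0, ht1⟩ := ht
  set m : ℝ := min t (1 - t) with hm
  have hm0 : 0 ≤ m := le_min ht0 (by linarith)
  have h2p : (2:ℝ) ^ p < 2 := by
    calc (2:ℝ) ^ p < 2 ^ (1:ℝ) := (Real.rpow_lt_rpow_left_iff one_lt_two).mpr hp1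
    _ = 2 := Real.rpow_one 2
  have h2p0 : (0:ℝ) < 2 ^ p := Real.rpow_pos_of_pos two_pos p
  have hr0 : (0:ℝ) ≤ 2 ^ p / 2 := by positivity
  have hr1 : (2:ℝ) ^ p / 2 < 1 := by
    rw [div_lt_one (by norm_num : (0:ℝ) < 2)]; exact h2p
  -- termwise bound
  have hterm : ∀ n : ℕ, dZ (2 ^ n * t) ^ p / 2 ^ n ≤ m ^ p * (2 ^ p / 2) ^ n := by
    intro n
    have h2n : (0:ℝ) < 2 ^ n := by positivity
    have hd1 : dZ (2 ^ n * t) ≤ 2 ^ n * t := by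
      have := round_le ((2:ℝ) ^ n * t) 0
      simpa [dZ, abs_of_nonneg (by positivity : (0:ℝ) ≤ 2 ^ n * t)] using this
    have hd2 : dZ (2 ^ n * t) ≤ 2 ^ n * (1 - t) := by
      calc dZ (2 ^ n * t) ≤ |(2:ℝ) ^ n * t - ((2^n : ℤ) : ℝ)| := round_le _ _
        _ = 2 ^ n * (1 - t) := by
            push_cast
            rw [abs_of_nonpos (by nlinarith)]; ring
    have hdm : dZ (2 ^ n * t) ≤ 2 ^ n * m := by
      rcases min_cases t (1 - t) with ⟨h, _⟩ | ⟨h, _⟩ <;> rw [hm, h]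
      · exact hd1
      · exact hd2
    have hd0 : 0 ≤ dZ (2 ^ n * t) := abs_nonneg _
    have hpow : dZ (2 ^ n * t) ^ p ≤ (2 ^ n * m) ^ p :=
      Real.rpow_le_rpow hd0 hdm hp0
    have heq : ((2:ℝ) ^ n * m) ^ p = (2 ^ p) ^ n * m ^ p := by
      rw [Real.mul_rpow (by positivity) hm0, ← Real.rpow_natCast (2:ℝ) n,
        ← Real.rpow_natCast ((2:ℝ)^p) n, ← Real.rpow_mul (by norm_num),
        ← Real.rpow_mul (by norm_num), mul_comm p]
    calc dZ (2 ^ n * t) ^ p / 2 ^ n ≤ (2 ^ n * m) ^ p / 2 ^ n := by gcongr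
      _ = m ^ p * (2 ^ p / 2) ^ n := by
          rw [heq, div_pow]; ring
  have hsumgeo : Summable (fun n : ℕ => m ^ p * (2 ^ p / 2) ^ n) :=
    (summable_geometric_of_lt_one hr0 hr1).mul_left _
  have hnn : ∀ n : ℕ, 0 ≤ dZ (2 ^ n * t) ^ p / 2 ^ n := by
    intro n
    have : (0:ℝ) ≤ dZ (2 ^ n * t) ^ p := Real.rpow_nonneg (abs_nonneg _) p
    positivity
  have hsum : Summable (fun n : ℕ => dZ (2 ^ n * t) ^ p / 2 ^ n) :=
    Summable.of_nonneg_of_le hnn hterm hsumgeo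
  have h1 : (∑' n : ℕ, dZ (2 ^ n * t) ^ p / 2 ^ n) ≤ ∑' n : ℕ, m ^ p * (2 ^ p / 2) ^ n :=
    Summable.tsum_le_tsum hterm hsum hsumgeo
  have h2 : (∑' n : ℕ, m ^ p * (2 ^ p / 2) ^ n) = m ^ p * (2 / (2 - 2 ^ p)) := by
    rw [tsum_mul_left, tsum_geometric_of_lt_one hr0 hr1]
    rw [show (1 - 2 ^ p / 2 : ℝ) = (2 - 2 ^ p) / 2 by ring, inv_div]
  have hmp : m ^ p ≤ t * (1 - t) ^ p + (1 - t) * t ^ p := by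
    have hle1 : m ^ p ≤ (1 - t) ^ p :=
      Real.rpow_le_rpow hm0 (min_le_right _ _) hp0
    have hle2 : m ^ p ≤ t ^ p :=
      Real.rpow_le_rpow hm0 (min_le_left _ _) hp0
    calc m ^ p = t * m ^ p + (1 - t) * m ^ p := by ring
      _ ≤ t * (1 - t) ^ p + (1 - t) * t ^ p := by
          have := Real.rpow_nonneg hm0 p
          gcongr <;> linarith
  have hc : (0:ℝ) ≤ 2 / (2 - 2 ^ p) := div_nonneg (by norm_num) (by linarith)
  calc (∑' n : ℕ, dZ (2 ^ n * t) ^ p / 2 ^ n)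
      ≤ m ^ p * (2 / (2 - 2 ^ p)) := by rw [← h2]; exact h1
    _ ≤ (t * (1 - t) ^ p + (1 - t) * t ^ p) * (2 / (2 - 2 ^ p)) := by gcongr
    _ = (2 / (2 - 2 ^ p)) * (t * (1 - t) ^ p + (1 - t) * t ^ p) := by ring
end
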